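/- Let (Λ, d) be a row-finite, source-free k-graph, and v ∈ Λ⁰ a vertex such that both Λ¹v (edges into v) and vΛ¹ (edges out of v) are complete edges, and v ≠ w := r(Λ¹v). Fix f ∈ Λ¹v. Then the reduced graph Λ_R = G_R*/∼_R — where G_R deletes v and the edges Λ¹v, redirects edges with range v to w, and μ ∼_R λ iff par(μ) ∼ par(λ) with par inserting f after every edge that formerly had range v — is a row-finite, source-free k-graph. -/

import Mathlib

open scoped Classical

/-- A `k`-colored directed graph: vertices, edges, range, source, and a color
(degree) in `Fin k` for each edge. -/
structure ColoredGraph (k : ℕ) where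
  V : Type
  E : Type
  src : E → V
  rng : E → V
  color : E → Fin k

namespace ColoredGraph

variable {k : ℕ}

/-- A list of edges (listed from the source end) is composable starting at `v`. -/
def Composable (G : ColoredGraph k) : G.V → List G.E → Prop
  | _, [] => True
  | v, e :: l => G.src e = v ∧ Composable G (G.rng e) l

/-- The final vertex reached by following a list of edges starting at `v`. -/
def endV (G : ColoredGraph k) : G.V → List G.E → G.V
  | v, [] => v
  | _, e :: l => endV G (G.rng e) l

/-- A finite path in `G` : an element of the path category `G*`.  The edges are
listed starting from the source (so the first edge of the list is the first,
innermost, edge of the path). -/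
structure GPath (G : ColoredGraph k) where
  src : G.V
  edges : List G.E
  comp : G.Composable src edges

namespace GPath

variable {G : ColoredGraph k}

/-- The range of a path. -/
def rng (p : GPath G) : G.V := G.endV p.src p.edges

/-- The color order of a path: the list of colors of its edges, starting from
the source end. -/
def colors (p : GPath G) : List (Fin k) := p.edges.map G.color

/-- The degree of a path, as an element of `ℕ^k`. -/
def deg (p : GPath G) : Fin k → ℕ := fun i => p.colors.count i

end GPath

theorem composable_append {G : ColoredGraph k} :
    ∀ (l₁ : List G.E) (v : G.V) (l₂ : List G.E),
      G.Composable v l₁ → G.Composable (G.endV v l₁) l₂ → G.Composable v (l₁ ++ l₂) := by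
  intro l₁
  induction l₁ with
  | nil => intro v l₂ _ h₂; exact h₂
  | cons e l ih => intro v l₂ h₁ h₂; exact ⟨h₁.1, ih (G.rng e) l₂ h₁.2 h₂⟩

theorem endV_append {G : ColoredGraph k} :
    ∀ (l₁ : List G.E) (v : G.V) (l₂ : List G.E),
      G.endV v (l₁ ++ l₂) = G.endV (G.endV v l₁) l₂ := by
  intro l₁
  induction l₁ with
  | nil => intro v l₂; rfl
  | cons e l ih => intro v l₂; exact ih (G.rng e) l₂

/-- Concatenation of composable paths. -/
def GPath.append {G : ColoredGraph k} (p q : GPath G) (h : p.rng = q.src) : GPath G :=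
  ⟨p.src, p.edges ++ q.edges,
    composable_append p.edges p.src q.edges p.comp
      (by rw [show G.endV p.src p.edges = q.src from h]; exact q.comp)⟩

/-- The path consisting of a single edge. -/
def edgePath (G : ColoredGraph k) (e : G.E) : GPath G :=
  ⟨G.src e, [e], by exact ⟨rfl, True.intro⟩⟩

/-- The relation preserves range, source and degree. -/
def PreservesRSD (G : ColoredGraph k) (rel : GPath G → GPath G → Prop) : Prop :=
  ∀ p q : GPath G, rel p q → p.src = q.src ∧ p.rng = q.rng ∧ p.deg = q.deg

/-- (KG0): the relation respects concatenation of paths. -/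
def KG0 (G : ColoredGraph k) (rel : GPath G → GPath G → Prop) : Prop :=
  ∀ (p₁ p₂ q₁ q₂ : GPath G) (h : p₁.rng = p₂.src) (h' : q₁.rng = q₂.src),
    rel p₁ q₁ → rel p₂ q₂ → rel (p₁.append p₂ h) (q₁.append q₂ h')

/-- (KG4): for each path and each permutation of its color order there is a
unique equivalent path with the permuted color order. -/
def KG4 (G : ColoredGraph k) (rel : GPath G → GPath G → Prop) : Prop :=
  ∀ (p : GPath G) (c : List (Fin k)), List.Perm c p.colors →
    ∃! q : GPath G, rel q p ∧ q.colors = c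

/-- (KG1): distinct edges are inequivalent. -/
def KG1 (G : ColoredGraph k) (rel : GPath G → GPath G → Prop) : Prop :=
  ∀ e f : G.E, rel (edgePath G e) (edgePath G f) ↔ e = f

/-- (KG2): completeness for bi-colored paths. -/
def KG2 (G : ColoredGraph k) (rel : GPath G → GPath G → Prop) : Prop :=
  ∀ (p : GPath G) (i j : Fin k), p.colors = [i, j] →
    ∃! q : GPath G, rel p q ∧ q.colors = [j, i]

/-- An equivalence relation, together with `KG0` and `KG4`, presents a `k`-graph. -/
def IsKGraphRel (G : ColoredGraph k) (rel : GPath G → GPath G → Prop) : Prop :=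
  Equivalence rel ∧ PreservesRSD G rel ∧ KG0 G rel ∧ KG4 G rel

/-- Every vertex receives an edge of every color. -/
def SourceFree (G : ColoredGraph k) : Prop :=
  ∀ (v : G.V) (i : Fin k), ∃ e : G.E, G.rng e = v ∧ G.color e = i

/-- Every vertex receives finitely many edges of each color. -/
def RowFinite (G : ColoredGraph k) : Prop :=
  ∀ (v : G.V) (i : Fin k), Set.Finite {e : G.E | G.rng e = v ∧ G.color e = i}

/-- `q` is obtained from `p` by replacing the initial (inner) two-edge subpath by
an equivalent two-edge path with transposed colors. -/
def SwapInner (G : ColoredGraph k) (rel : GPath G → GPath G → Prop) (p q : GPath G) : Prop :=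
  ∃ (a b w : GPath G) (ha : a.rng = w.src) (hb : b.rng = w.src),
    a.edges.length = 2 ∧ b.colors = a.colors.reverse ∧ rel a b ∧
    p = a.append w ha ∧ q = b.append w hb

/-- `q` is obtained from `p` by replacing the final (outer) two-edge subpath by
an equivalent two-edge path with transposed colors. -/
def SwapOuter (G : ColoredGraph k) (rel : GPath G → GPath G → Prop) (p q : GPath G) : Prop :=
  ∃ (w a b : GPath G) (ha : w.rng = a.src) (hb : w.rng = b.src),
    a.edges.length = 2 ∧ b.colors = a.colors.reverse ∧ rel a b ∧
    p = w.append a ha ∧ q = w.append b hb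

/-- (KG3): associativity. For a tri-colored path with pairwise distinct colors,
the two standard routes of successive pairwise swaps give the same result. -/
def KG3 (G : ColoredGraph k) (rel : GPath G → GPath G → Prop) : Prop :=
  ∀ (p : GPath G) (i j l : Fin k), i ≠ j → j ≠ l → i ≠ l →
    p.colors = [l, j, i] → ∀ p₁ p₂ p₃ q₁ q₂ q₃ : GPath G,
      SwapOuter G rel p p₁ → SwapInner G rel p₁ p₂ → SwapOuter G rel p₂ p₃ →
      SwapInner G rel p q₁ → SwapOuter G rel q₁ q₂ → SwapInner G rel q₂ q₃ → p₃ = q₃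

/-- `w ≤ v` : there is a path from `v` to `w` (source `v`, range `w`). -/
def LeV (G : ColoredGraph k) (v w : G.V) : Prop :=
  ∃ p : GPath G, p.src = v ∧ p.rng = w

theorem LeV_extend {G : ColoredGraph k} {v : G.V} (e : G.E)
    (h : LeV G v (G.src e)) : LeV G v (G.rng e) := by
  obtain ⟨p, hs, hr⟩ := h
  refine ⟨p.append (edgePath G e) hr, hs, ?_⟩
  show G.endV p.src (p.edges ++ [e]) = G.rng e
  exact (endV_append p.edges p.src [e]).trans rfl

/-- A complete edge from `u` to `w`: exactly one edge of each color, all with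
source `u` and range `w`, closed under commuting squares. -/
def IsCompleteEdge (G : ColoredGraph k) (rel : GPath G → GPath G → Prop)
    (E : Set G.E) (u w : G.V) : Prop :=
  (∀ i : Fin k, ∃! e : G.E, e ∈ E ∧ G.color e = i) ∧
  (∀ e ∈ E, G.src e = u ∧ G.rng e = w) ∧
  (∀ e ∈ E, ∀ a b f' : G.E, ∀ p q : GPath G,
    ((p.edges = [a, e] ∧ q.edges = [b, f']) ∨ (p.edges = [e, a] ∧ q.edges = [f', b])) →
    rel p q → f' ∈ E)

/-- A set `T` of edges of the color of `f` is closed under being opposite to a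
member in a commuting square whose other color differs from that of `f`. -/
def SqClosed (G : ColoredGraph k) (rel : GPath G → GPath G → Prop)
    (f : G.E) (T : Set G.E) : Prop :=
  ∀ g ∈ T, ∀ (e a b : G.E) (p q : GPath G),
    G.color a = G.color b → G.color a ≠ G.color f → G.color e = G.color f →
    ((p.edges = [g, a] ∧ q.edges = [b, e]) ∨ (p.edges = [a, g] ∧ q.edges = [e, b])) →
    rel p q → e ∈ T

/-- Vertices of the reduced graph: the old vertices other than `v`. -/
abbrev RV (G : ColoredGraph k) (v : G.V) := {x : G.V // x ≠ v}

/-- Edges of the reduced graph: the old edges whose source is not `v`. -/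
abbrev RE (G : ColoredGraph k) (v : G.V) := {e : G.E // G.src e ≠ v}

/-- The reduced colored graph: `v` and the edges with source `v` are deleted,
and edges with range `v` are redirected to `w`. -/
noncomputable def ReduceGraph (G : ColoredGraph k) (v w : G.V) (hwv : w ≠ v) :
    ColoredGraph k where
  V := RV G v
  E := RE G v
  src := fun e => ⟨G.src e.1, e.2⟩
  rng := fun e => if h : G.rng e.1 = v then ⟨w, hwv⟩ else ⟨G.rng e.1, h⟩
  color := fun e => G.color e.1

/-- The parent of a list of edges of the reduced graph: the fixed edge
`f ∈ Λ¹v` is inserted after every edge that formerly had range `v`. -/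
noncomputable def parList (G : ColoredGraph k) (v : G.V) (f : G.E) :
    List (RE G v) → List G.E
  | [] => []
  | e :: l => (if G.rng e.1 = v then [e.1, f] else [e.1]) ++ parList G v f l

/-- The equivalence relation on paths of the reduced graph: paths are related
iff their parents are related in the original graph. -/
noncomputable def ReduceRel (G : ColoredGraph k) (rel : GPath G → GPath G → Prop)
    (v w : G.V) (hwv : w ≠ v) (f : G.E)
    (p q : GPath (ReduceGraph G v w hwv)) : Prop :=
  ∃ p' q' : GPath G,
    p'.src = p.src.1 ∧ p'.edges = parList G v f p.edges ∧
    q'.src = q.src.1 ∧ q'.edges = parList G v f q.edges ∧ rel p' q'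

/-! ### Auxiliary lemmas -/

section Aux

variable {G : ColoredGraph k} {rel : GPath G → GPath G → Prop}

theorem GPath.ext' {p q : GPath G} (h1 : p.src = q.src) (h2 : p.edges = q.edges) : p = q := by
  cases p; cases q; cases h1; cases h2; rfl

theorem composable_split :
    ∀ (l₁ : List G.E) (x : G.V) (l₂ : List G.E), G.Composable x (l₁ ++ l₂) →
      G.Composable x l₁ ∧ G.Composable (G.endV x l₁) l₂ := by
  intro l₁
  induction l₁ with
  | nil => exact fun x l₂ h => ⟨trivial, h⟩
  | cons e l ih =>
    intro x l₂ h
    exact ⟨⟨h.1, (ih _ _ h.2).1⟩, (ih _ _ h.2).2⟩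

theorem rel_eq_of_colors_eq (hK : IsKGraphRel G rel) {a b : GPath G}
    (hab : rel a b) (hc : a.colors = b.colors) : a = b := by
  obtain ⟨q, _, huniq⟩ := hK.2.2.2 b b.colors (List.Perm.refl _)
  exact (huniq a ⟨hab, hc⟩).trans (huniq b ⟨hK.1.refl b, rfl⟩).symm

theorem rel_perm (hK : IsKGraphRel G rel) {a b : GPath G} (hab : rel a b) :
    a.colors.Perm b.colors :=
  List.perm_iff_count.mpr fun i => congrFun (hK.2.1 a b hab).2.2 i

/-- One adjacent transposition on a list. -/
def AdjStep (l m : List (Fin k)) : Prop :=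
  ∃ c₁ i j c₂, l = c₁ ++ i :: j :: c₂ ∧ m = c₁ ++ j :: i :: c₂

theorem perm_adjChain : ∀ {l m : List (Fin k)}, l.Perm m →
    Relation.ReflTransGen AdjStep l m := by
  intro l m h
  induction h with
  | nil => exact .refl
  | cons x h ih =>
    refine Relation.ReflTransGen.lift (x :: ·) ?_ _ _ ih
    rintro a b ⟨c₁, i, j, c₂, h1, h2⟩
    exact ⟨x :: c₁, i, j, c₂, by simp [h1], by simp [h2]⟩
  | swap x y l => exact .single ⟨[], y, x, l, rfl, rfl⟩
  | trans _ _ ih1 ih2 => exact ih1.trans ih2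

theorem exists_decomp :
    ∀ (l : List G.E) (c₁ : List (Fin k)) (i j : Fin k) (c₂ : List (Fin k)),
      l.map G.color = c₁ ++ i :: j :: c₂ →
      ∃ (x : List G.E) (s1 s2 : G.E) (y : List G.E),
        l = x ++ s1 :: s2 :: y ∧ x.map G.color = c₁ ∧ G.color s1 = i ∧
        G.color s2 = j ∧ y.map G.color = c₂ := by
  intro l
  induction l with
  | nil => intro c₁ i j c₂ h; simp at h
  | cons e l ih =>
    intro c₁ i j c₂ h
    cases c₁ with
    | nil =>
      simp only [List.map_cons, List.nil_append, List.cons.injEq] at h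
      obtain ⟨h1, h2⟩ := h
      cases l with
      | nil => simp at h2
      | cons e' l' =>
        simp only [List.map_cons, List.cons.injEq] at h2
        exact ⟨[], e, e', l', rfl, rfl, h1, h2.1, h2.2⟩
    | cons c c₁' =>
      simp only [List.map_cons, List.cons_append, List.cons.injEq] at h
      obtain ⟨x, s1, s2, y, h1, h2, h3, h4, h5⟩ := ih c₁' i j c₂ h.2
      exact ⟨e :: x, s1, s2, y, by rw [h1]; rfl, by simp [h2, h.1], h3, h4, h5⟩

theorem swap_step {v u : G.V} (hK : IsKGraphRel G rel)
    (hin : IsCompleteEdge G rel {e : G.E | G.rng e = v} u v)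
    (a : GPath G) (c₁ c₂ : List (Fin k)) (i j : Fin k)
    (h : a.colors = c₁ ++ i :: j :: c₂) :
    ∃ a₁ : GPath G, rel a a₁ ∧ a₁.colors = c₁ ++ j :: i :: c₂ ∧
      a₁.edges.map (fun e => decide (G.src e = v)) =
        a.edges.map (fun e => decide (G.src e = v)) := by
  obtain ⟨x, s1, s2, y, he, hx, hs1, hs2, hy⟩ := exists_decomp a.edges c₁ i j c₂ h
  have hsplit := composable_split x a.src (s1 :: s2 :: y) (he ▸ a.comp)
  set vx := G.endV a.src x with hvx
  obtain ⟨hcs1, hcs2, hcy⟩ : G.src s1 = vx ∧ G.src s2 = G.rng s1 ∧ G.Composable (G.rng s2) y :=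
    ⟨hsplit.2.1, hsplit.2.2.1, hsplit.2.2.2⟩
  set s : GPath G := ⟨vx, [s1, s2], ⟨hcs1, hcs2, trivial⟩⟩ with hs
  have hscol : s.colors = [i, j] := by simp [GPath.colors, hs, hs1, hs2]
  obtain ⟨t, ⟨hts, htc⟩, -⟩ := hK.2.2.2 s [j, i] (by rw [hscol]; exact List.Perm.swap i j [])
  obtain ⟨t1, t2, hte⟩ : ∃ t1 t2, t.edges = [t1, t2] := by
    have := htc
    unfold GPath.colors at this
    rcases ht : t.edges with _ | ⟨t1, _ | ⟨t2, _ | _⟩⟩ <;> rw [ht] at this <;> simp at this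
    exact ⟨t1, t2, rfl⟩
  have PT := hK.2.1 t s hts
  have htsrc : t.src = vx := PT.1
  have hct1 : G.src t1 = t.src := by have := t.comp; rw [hte] at this; exact this.1
  have hct2 : G.src t2 = G.rng t1 := by have := t.comp; rw [hte] at this; exact this.2.1
  have htrng : G.rng t2 = G.rng s2 := by
    have h2 : t.rng = s.rng := PT.2.1
    unfold GPath.rng at h2
    rw [hte] at h2
    exact h2
  have hcolt : G.color t1 = j ∧ G.color t2 = i := by
    have := htc
    unfold GPath.colors at this
    rw [hte] at this
    simpa using this
  have hcompNew : G.Composable a.src (x ++ t1 :: t2 :: y) :=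
    composable_append x a.src _ hsplit.1 ⟨hct1.trans htsrc, hct2, htrng ▸ hcy⟩
  refine ⟨⟨a.src, x ++ t1 :: t2 :: y, hcompNew⟩, ?_, ?_, ?_⟩
  · -- rel a a₁
    set px : GPath G := ⟨a.src, x, hsplit.1⟩ with hpx
    set py : GPath G := ⟨G.rng s2, y, hcy⟩ with hpy
    have h1 : s.rng = py.src := rfl
    have h2 : t.rng = py.src := PT.2.1
    have h3 : px.rng = s.src := rfl
    have h4 : px.rng = t.src := htsrc.symm
    have ha : a = px.append (s.append py h1) h3 := GPath.ext' rfl (by simp [GPath.append, he, hpx, hpy, hs])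
    have ha₁ : (⟨a.src, x ++ t1 :: t2 :: y, hcompNew⟩ : GPath G)
        = px.append (t.append py h2) h4 := GPath.ext' rfl (by simp [GPath.append, hte, hpx, hpy])
    have hrel := hK.2.2.1 px (s.append py h1) px (t.append py h2) h3 h4 (hK.1.refl px)
      (hK.2.2.1 s py t py h1 h2 (hK.1.symm hts) (hK.1.refl py))
    rwa [← ha, ← ha₁] at hrel
  · simp [GPath.colors, hx, hy, hcolt.1, hcolt.2]
  · rw [he]
    simp only [List.map_append, List.map_cons]
    have e1 : G.src t1 = G.src s1 := by rw [hct1, htsrc, hcs1]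
    have hiff : G.rng s1 = v ↔ G.rng t1 = v := by
      constructor
      · intro hm
        exact hin.2.2 s1 hm s2 t2 t1 s t (Or.inr ⟨rfl, hte⟩) (hK.1.symm hts)
      · intro hm
        exact hin.2.2 t1 hm t2 s2 s1 t s (Or.inr ⟨hte, rfl⟩) hts
    have e2 : decide (G.src t2 = v) = decide (G.src s2 = v) := by
      rw [hct2, hcs2]
      exact decide_eq_decide.mpr hiff.symm
    rw [e1, e2]

theorem bool_invariant {v u : G.V} (hK : IsKGraphRel G rel)
    (hin : IsCompleteEdge G rel {e : G.E | G.rng e = v} u v) :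
    ∀ a b : GPath G, rel a b →
      a.edges.map (fun e => decide (G.src e = v)) =
        b.edges.map (fun e => decide (G.src e = v)) := by
  intro a b hab
  have hchain := perm_adjChain (rel_perm hK hab)
  suffices hgen : ∀ l, Relation.ReflTransGen AdjStep l b.colors →
      ∀ a' : GPath G, a'.colors = l → rel a' b →
        a'.edges.map (fun e => decide (G.src e = v)) =
          b.edges.map (fun e => decide (G.src e = v)) from
    hgen a.colors hchain a rfl hab
  intro l hl
  induction hl using Relation.ReflTransGen.head_induction_on with
  | refl =>
    intro a' hc hab'
    rw [rel_eq_of_colors_eq hK hab' hc]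
  | head step tail ih =>
    intro a' hc hab'
    obtain ⟨c₁, i, j, c₂, h1, h2⟩ := step
    obtain ⟨a₁, r1, hc1, hb1⟩ := swap_step hK hin a' c₁ c₂ i j (hc.trans h1)
    have := ih a₁ (hc1.trans h2.symm) (hK.1.trans (hK.1.symm r1) hab')
    exact hb1.symm.trans this

/-- Insert the color `cf` at the positions marked `true`. -/
def insW (cf : Fin k) : List Bool → List (Fin k) → List (Fin k)
  | [], _ => []
  | true :: bs, cs => cf :: insW cf bs cs
  | false :: _, [] => []
  | false :: bs, c :: cs => c :: insW cf bs cs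

theorem insW_perm (cf : Fin k) : ∀ (bs : List Bool) (cs : List (Fin k)),
    cs.length = bs.count false →
    (insW cf bs cs).Perm (List.replicate (bs.count true) cf ++ cs) := by
  intro bs
  induction bs with
  | nil =>
    intro cs hlen
    simp at hlen
    simp [insW, hlen]
  | cons b bs ih =>
    intro cs hlen
    cases b with
    | true =>
      simp only [List.count_cons] at hlen ⊢
      simpa [insW, List.replicate_succ] using (ih cs (by simpa using hlen)).cons cf
    | false =>
      cases cs with
      | nil => simp [List.count_cons] at hlen
      | cons c cs =>
        simp only [List.count_cons] at hlen ⊢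
        have := (ih cs (by simpa using hlen)).cons c
        simp only [insW]
        refine this.trans ?_
        simpa using List.perm_middle.symm

section Par

variable {G : ColoredGraph k} {rel : GPath G → GPath G → Prop}
variable {v w : G.V} {hwv : w ≠ v} {f : G.E}

theorem parList_spec (hf : G.src f = v) (hfr : G.rng f = w) :
    ∀ (l : List (RE G v)) (x : RV G v), (ReduceGraph G v w hwv).Composable x l →
      G.Composable x.1 (parList G v f l) ∧
        G.endV x.1 (parList G v f l) = ((ReduceGraph G v w hwv).endV x l).1 := by
  intro l
  induction l with
  | nil => exact fun x _ => ⟨trivial, rfl⟩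
  | cons e l ih =>
    intro x h
    have hsrc : G.src e.1 = x.1 := congrArg Subtype.val h.1
    obtain ⟨hc, hend⟩ := ih _ h.2
    by_cases hr : G.rng e.1 = v
    · have hrng : (ReduceGraph G v w hwv).rng e = ⟨w, hwv⟩ := dif_pos hr
      rw [hrng] at hc hend
      constructor
      · show G.Composable x.1 ((if G.rng e.1 = v then [e.1, f] else [e.1]) ++ parList G v f l)
        rw [if_pos hr]
        exact ⟨hsrc, hf.trans hr.symm, hfr ▸ hc⟩
      · show G.endV x.1 ((if G.rng e.1 = v then [e.1, f] else [e.1]) ++ parList G v f l) = _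
        rw [if_pos hr]
        show G.endV (G.rng f) (parList G v f l) = _
        rw [hfr, hend]
        exact congrArg (fun z : RV G v => ((ReduceGraph G v w hwv).endV z l).1) hrng.symm
    · have hrng : (ReduceGraph G v w hwv).rng e = ⟨G.rng e.1, hr⟩ := dif_neg hr
      rw [hrng] at hc hend
      constructor
      · show G.Composable x.1 ((if G.rng e.1 = v then [e.1, f] else [e.1]) ++ parList G v f l)
        rw [if_neg hr]
        exact ⟨hsrc, hc⟩
      · show G.endV x.1 ((if G.rng e.1 = v then [e.1, f] else [e.1]) ++ parList G v f l) = _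
        rw [if_neg hr]
        show G.endV (G.rng e.1) (parList G v f l) = _
        rw [hend]
        exact congrArg (fun z : RV G v => ((ReduceGraph G v w hwv).endV z l).1) hrng.symm

/-- The parent path of a reduced path. -/
noncomputable def parPath (hwv : w ≠ v) (hf : G.src f = v) (hfr : G.rng f = w)
    (p : GPath (ReduceGraph G v w hwv)) : GPath G :=
  ⟨p.src.1, parList G v f p.edges, (parList_spec hf hfr p.edges p.src p.comp).1⟩

theorem parPath_rng (hf : G.src f = v) (hfr : G.rng f = w)
    (p : GPath (ReduceGraph G v w hwv)) : (parPath hwv hf hfr p).rng = p.rng.1 :=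
  (parList_spec hf hfr p.edges p.src p.comp).2

theorem parList_append : ∀ l₁ l₂ : List (RE G v),
    parList G v f (l₁ ++ l₂) = parList G v f l₁ ++ parList G v f l₂ := by
  intro l₁ l₂
  induction l₁ with
  | nil => rfl
  | cons e l ih =>
    show (if G.rng e.1 = v then [e.1, f] else [e.1]) ++ parList G v f (l ++ l₂) = _
    rw [ih, parList, List.append_assoc]

theorem parList_inj : ∀ l₁ l₂ : List (RE G v),
    parList G v f l₁ = parList G v f l₂ → l₁ = l₂ := by
  intro l₁
  induction l₁ with
  | nil =>
    intro l₂ h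
    cases l₂ with
    | nil => rfl
    | cons e l =>
      exfalso
      by_cases hr : G.rng e.1 = v <;> simp [parList, hr] at h
  | cons e l ih =>
    intro l₂ h
    cases l₂ with
    | nil =>
      exfalso
      by_cases hr : G.rng e.1 = v <;> simp [parList, hr] at h
    | cons e' l' =>
      simp only [parList] at h
      split_ifs at h with h1 h2 h2 <;>
        simp only [List.cons_append, List.nil_append, List.cons.injEq] at h
      · rw [Subtype.ext h.1, ih l' h.2.2]
      · exact absurd ((congrArg G.rng h.1) ▸ h1) h2
      · exact absurd ((congrArg G.rng h.1) ▸ h2) h1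
      · rw [Subtype.ext h.1, ih l' h.2]

theorem reduceRel_iff (hf : G.src f = v) (hfr : G.rng f = w)
    (p q : GPath (ReduceGraph G v w hwv)) :
    ReduceRel G rel v w hwv f p q ↔ rel (parPath hwv hf hfr p) (parPath hwv hf hfr q) := by
  constructor
  · rintro ⟨p', q', h1, h2, h3, h4, h5⟩
    have hp : p' = parPath hwv hf hfr p := GPath.ext' h1 h2
    have hq : q' = parPath hwv hf hfr q := GPath.ext' h3 h4
    rwa [hp, hq] at h5
  · intro h
    exact ⟨parPath hwv hf hfr p, parPath hwv hf hfr q, rfl, rfl, rfl, rfl, h⟩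

theorem parList_colors (hf : G.src f = v) : ∀ l : List (RE G v),
    (parList G v f l).map G.color =
      insW (G.color f) ((parList G v f l).map (fun e => decide (G.src e = v)))
        (l.map (fun e => G.color e.1)) := by
  intro l
  induction l with
  | nil => rfl
  | cons e l ih =>
    by_cases hr : G.rng e.1 = v
    · simp only [parList, if_pos hr, List.cons_append, List.nil_append, List.map_cons,
        decide_eq_false e.2, decide_eq_true hf, insW, ih]
    · simp only [parList, if_neg hr, List.cons_append, List.nil_append, List.map_cons,
        decide_eq_false e.2, insW, ih]

theorem parList_count_false (hf : G.src f = v) : ∀ l : List (RE G v),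
    ((parList G v f l).map (fun e => decide (G.src e = v))).count false = l.length := by
  intro l
  induction l with
  | nil => rfl
  | cons e l ih =>
    by_cases hr : G.rng e.1 = v <;>
      simp [parList, hr, List.count_cons, ih, decide_eq_false e.2, decide_eq_true hf]

theorem insW_count (cf i : Fin k) (bs : List Bool) (cs : List (Fin k))
    (h : cs.length = bs.count false) :
    (insW cf bs cs).count i = cs.count i + if cf = i then bs.count true else 0 := by
  rw [(insW_perm cf bs cs h).count_eq i, List.count_append, List.count_replicate]
  by_cases hcf : cf = i
  · simp [hcf]
    omega
  · simp [hcf, Ne.symm hcf]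

/-- Delete the edges with source `v` from a list of edges. -/
noncomputable def redList (G : ColoredGraph k) (v : G.V) : List G.E → List (RE G v)
  | [] => []
  | e :: l => if h : G.src e = v then redList G v l else ⟨e, h⟩ :: redList G v l

theorem parList_redList (hwv : w ≠ v) (hf : G.src f = v) (hfr : G.rng f = w) :
    ∀ (n : ℕ) (l : List G.E), l.length ≤ n → ∀ x : G.V, x ≠ v → G.Composable x l →
      G.endV x l ≠ v → (∀ e ∈ l, G.src e = v → e = f) →
      parList G v f (redList G v l) = l := by
  intro n
  induction n with
  | zero =>
    intro l hlen
    rw [List.length_eq_zero_iff.mp (Nat.le_zero.mp hlen)]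
    exact fun _ _ _ _ _ => rfl
  | succ n ih =>
    intro l hlen x hx hc he hsrcf
    cases l with
    | nil => rfl
    | cons e l' =>
      have hsev : G.src e ≠ v := hc.1 ▸ hx
      by_cases hr : G.rng e = v
      · cases l' with
        | nil => exact absurd hr he
        | cons e' l'' =>
          have he' : e' = f := hsrcf e' (by simp) (hc.2.1.trans hr)
          subst e'
          simp only [redList, dif_neg hsev, dif_pos hf, parList, if_pos hr,
            List.cons_append, List.nil_append, List.cons.injEq, true_and]
          exact ih l'' (by simp at hlen; omega) (G.rng f) (hfr ▸ hwv) hc.2.2 he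
            fun e'' hm hs => hsrcf e'' (by simp [hm]) hs
      · simp only [redList, dif_neg hsev, parList, if_neg hr, List.cons_append,
          List.nil_append, List.cons.injEq, true_and]
        exact ih l' (by simp at hlen; omega) (G.rng e) hr hc.2 he
          fun e'' hm hs => hsrcf e'' (by simp [hm]) hs

theorem comp_of_parList (hwv : w ≠ v) (hf : G.src f = v) (hfr : G.rng f = w) :
    ∀ (l : List (RE G v)) (x : RV G v),
      G.Composable x.1 (parList G v f l) → (ReduceGraph G v w hwv).Composable x l := by
  intro l
  induction l with
  | nil => exact fun _ _ => trivial
  | cons e l ih =>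
    intro x hc
    by_cases hr : G.rng e.1 = v
    · simp only [parList, if_pos hr, List.cons_append, List.nil_append] at hc
      refine ⟨Subtype.ext hc.1, ?_⟩
      have hrng : (ReduceGraph G v w hwv).rng e = ⟨w, hwv⟩ := dif_pos hr
      rw [hrng]
      exact ih ⟨w, hwv⟩ (hfr ▸ hc.2.2)
    · simp only [parList, if_neg hr, List.cons_append, List.nil_append] at hc
      refine ⟨Subtype.ext hc.1, ?_⟩
      have hrng : (ReduceGraph G v w hwv).rng e = ⟨G.rng e.1, hr⟩ := dif_neg hr
      rw [hrng]
      exact ih ⟨G.rng e.1, hr⟩ hc.2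

theorem color_eq_of_insW {v : G.V} (cf : Fin k) :
    ∀ (l : List G.E) (cs : List (Fin k)),
      l.map G.color = insW cf (l.map (fun e => decide (G.src e = v))) cs →
      ∀ e ∈ l, G.src e = v → G.color e = cf := by
  intro l
  induction l with
  | nil =>
    intro cs _ e he
    simp at he
  | cons e l ih =>
    intro cs hcolor e' he' hsrc
    by_cases hv : G.src e = v
    · rw [List.map_cons, List.map_cons, decide_eq_true hv] at hcolor
      simp only [insW, List.cons.injEq] at hcolor
      rcases List.mem_cons.mp he' with rfl | he''
      · exact hcolor.1
      · exact ih cs hcolor.2 e' he'' hsrc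
    · rw [List.map_cons, List.map_cons, decide_eq_false hv] at hcolor
      cases cs with
      | nil => simp [insW] at hcolor
      | cons c cs' =>
        simp only [insW, List.cons.injEq] at hcolor
        rcases List.mem_cons.mp he' with rfl | he''
        · exact absurd hsrc hv
        · exact ih cs' hcolor.2 e' he'' hsrc

theorem redList_colors {v : G.V} (cf : Fin k) :
    ∀ (l : List G.E) (cs : List (Fin k)),
      cs.length = (l.map (fun e => decide (G.src e = v))).count false →
      l.map G.color = insW cf (l.map (fun e => decide (G.src e = v))) cs →
      (redList G v l).map (fun e => G.color e.1) = cs := by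
  intro l
  induction l with
  | nil =>
    intro cs hlen _
    simp at hlen
    simp [redList, hlen]
  | cons e l ih =>
    intro cs hlen hcolor
    by_cases hv : G.src e = v
    · rw [List.map_cons, decide_eq_true hv] at hlen
      rw [List.map_cons, List.map_cons, decide_eq_true hv] at hcolor
      simp only [insW, List.cons.injEq] at hcolor
      simp only [List.count_cons] at hlen
      simp only [redList, dif_pos hv]
      exact ih cs (by simpa using hlen) hcolor.2
    · rw [List.map_cons, List.map_cons, decide_eq_false hv] at hcolor
      cases cs with
      | nil =>
        rw [List.map_cons, decide_eq_false hv] at hlen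
        simp at hlen
      | cons c cs' =>
        simp only [insW, List.cons.injEq] at hcolor
        simp only [redList, dif_neg hv, List.map_cons, hcolor.1, List.cons.injEq, true_and]
        refine ih cs' ?_ hcolor.2
        rw [List.map_cons, decide_eq_false hv, List.count_cons] at hlen
        simpa using hlen

end Par

end Aux

/-- Reduction of a row-finite source-free `k`-graph at a vertex `v` whose
incoming and outgoing edge sets are complete edges (and `v ≠ w = r(Λ¹v)`)
yields a row-finite source-free `k`-graph. -/
theorem reduce_is_kgraph {k : ℕ} (G : ColoredGraph k) (rel : GPath G → GPath G → Prop)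
    (hK : IsKGraphRel G rel) (hsf : SourceFree G) (hrf : RowFinite G)
    (v w u : G.V) (hwv : w ≠ v)
    (hout : IsCompleteEdge G rel {e : G.E | G.src e = v} v w)
    (hin : IsCompleteEdge G rel {e : G.E | G.rng e = v} u v)
    (f : G.E) (hf : G.src f = v) :
    IsKGraphRel (ReduceGraph G v w hwv) (ReduceRel G rel v w hwv f) ∧
      SourceFree (ReduceGraph G v w hwv) ∧ RowFinite (ReduceGraph G v w hwv) := by
  have hfr : G.rng f = w := (hout.2.1 f hf).2
  set cf := G.color f with hcf
  have hiff : ∀ p q, ReduceRel G rel v w hwv f p q ↔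
      rel (parPath hwv hf hfr p) (parPath hwv hf hfr q) := reduceRel_iff hf hfr
  -- uniqueness claim used for KG4
  have huniq : ∀ (P : GPath (ReduceGraph G v w hwv)) (c : List (Fin k))
      (y₁ y₂ : GPath (ReduceGraph G v w hwv)),
      ReduceRel G rel v w hwv f y₁ P → ReduceRel G rel v w hwv f y₂ P →
      y₁.colors = c → y₂.colors = c → y₁ = y₂ := by
    intro P c y₁ y₂ h₁ h₂ hc₁ hc₂
    have r₁ := (hiff y₁ P).mp h₁
    have r₂ := (hiff y₂ P).mp h₂
    have r12 : rel (parPath hwv hf hfr y₁) (parPath hwv hf hfr y₂) :=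
      hK.1.trans r₁ (hK.1.symm r₂)
    have hbool := bool_invariant hK hin _ _ r12
    have hw₁ : (parPath hwv hf hfr y₁).colors =
        insW cf ((parList G v f y₁.edges).map (fun e => decide (G.src e = v)))
          (y₁.edges.map (fun e => G.color e.1)) := parList_colors hf y₁.edges
    have hw₂ : (parPath hwv hf hfr y₂).colors =
        insW cf ((parList G v f y₂.edges).map (fun e => decide (G.src e = v)))
          (y₂.edges.map (fun e => G.color e.1)) := parList_colors hf y₂.edges
    have hred₁ : y₁.edges.map (fun e => G.color e.1) = c := hc₁
    have hred₂ : y₂.edges.map (fun e => G.color e.1) = c := hc₂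
    have hcols : (parPath hwv hf hfr y₁).colors = (parPath hwv hf hfr y₂).colors := by
      rw [hw₁, hw₂, hred₁, hred₂]
      exact congrArg (fun bs => insW cf bs c) hbool
    have hpq := rel_eq_of_colors_eq hK r12 hcols
    have hsrc : y₁.src = y₂.src := Subtype.ext (congrArg GPath.src hpq)
    have hedges : y₁.edges = y₂.edges := parList_inj _ _ (congrArg GPath.edges hpq)
    exact GPath.ext' hsrc hedges
  refine ⟨⟨⟨?_, ?_, ?_⟩, ?_, ?_, ?_⟩, ?_, ?_⟩
  · -- refl
    exact fun p => (hiff p p).mpr (hK.1.refl _)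
  · -- symm
    exact fun h => (hiff _ _).mpr (hK.1.symm ((hiff _ _).mp h))
  · -- trans
    exact fun h h' => (hiff _ _).mpr (hK.1.trans ((hiff _ _).mp h) ((hiff _ _).mp h'))
  · -- PreservesRSD
    intro p q h
    have hr := (hiff p q).mp h
    have H := hK.2.1 _ _ hr
    refine ⟨Subtype.ext H.1, ?_, ?_⟩
    · refine Subtype.ext ?_
      rw [← parPath_rng hf hfr p, ← parPath_rng hf hfr q]
      exact H.2.1
    · funext i
      have hbool := bool_invariant hK hin _ _ hr
      have hdeg := congrFun H.2.2 i
      have hw₁ : (parPath hwv hf hfr p).colors =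
          insW cf ((parList G v f p.edges).map (fun e => decide (G.src e = v)))
            (p.edges.map (fun e => G.color e.1)) := parList_colors hf p.edges
      have hw₂ : (parPath hwv hf hfr q).colors =
          insW cf ((parList G v f q.edges).map (fun e => decide (G.src e = v)))
            (q.edges.map (fun e => G.color e.1)) := parList_colors hf q.edges
      have hl₁ : (p.edges.map (fun e => G.color e.1)).length =
          ((parList G v f p.edges).map (fun e => decide (G.src e = v))).count false := by
        rw [List.length_map]; exact (parList_count_false hf _).symm
      have hl₂ : (q.edges.map (fun e => G.color e.1)).length =
          ((parList G v f q.edges).map (fun e => decide (G.src e = v))).count false := by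
        rw [List.length_map]; exact (parList_count_false hf _).symm
      have c₁ := insW_count cf i _ _ hl₁
      have c₂ := insW_count cf i _ _ hl₂
      rw [GPath.deg, GPath.deg] at *
      have hcount : ((parPath hwv hf hfr p).colors).count i =
          ((parPath hwv hf hfr q).colors).count i := hdeg
      rw [hw₁, c₁] at hcount
      rw [hw₂, c₂] at hcount
      have hbool' : (parList G v f p.edges).map (fun e => decide (G.src e = v)) =
          (parList G v f q.edges).map (fun e => decide (G.src e = v)) := hbool
      rw [hbool'] at hcount
      show (p.edges.map (fun e => G.color e.1)).count i =
        (q.edges.map (fun e => G.color e.1)).count i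
      exact Nat.add_right_cancel hcount
  · -- KG0
    intro p₁ p₂ q₁ q₂ h h' r1 r2
    have hr1 := (hiff _ _).mp r1
    have hr2 := (hiff _ _).mp r2
    have hh : (parPath hwv hf hfr p₁).rng = (parPath hwv hf hfr p₂).src := by
      rw [parPath_rng hf hfr]; exact congrArg Subtype.val h
    have hh' : (parPath hwv hf hfr q₁).rng = (parPath hwv hf hfr q₂).src := by
      rw [parPath_rng hf hfr]; exact congrArg Subtype.val h'
    refine (hiff _ _).mpr ?_
    have e1 : parPath hwv hf hfr (p₁.append p₂ h) =
        (parPath hwv hf hfr p₁).append (parPath hwv hf hfr p₂) hh :=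
      GPath.ext' rfl (parList_append _ _)
    have e2 : parPath hwv hf hfr (q₁.append q₂ h') =
        (parPath hwv hf hfr q₁).append (parPath hwv hf hfr q₂) hh' :=
      GPath.ext' rfl (parList_append _ _)
    rw [e1, e2]
    exact hK.2.2.1 _ _ _ _ hh hh' hr1 hr2
  · -- KG4
    intro P c hperm
    have hperm' : c.Perm (P.edges.map (fun e => G.color e.1)) := hperm
    have hl : (P.edges.map (fun e => G.color e.1)).length =
        ((parList G v f P.edges).map (fun e => decide (G.src e = v))).count false := by
      rw [List.length_map]; exact (parList_count_false hf _).symm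
    have hlc : c.length =
        ((parList G v f P.edges).map (fun e => decide (G.src e = v))).count false :=
      hperm'.length_eq.trans hl
    have hwP : (parPath hwv hf hfr P).colors =
        insW cf ((parList G v f P.edges).map (fun e => decide (G.src e = v)))
          (P.edges.map (fun e => G.color e.1)) := parList_colors hf P.edges
    have hpermW :
        (insW cf ((parList G v f P.edges).map (fun e => decide (G.src e = v))) c).Perm
          ((parPath hwv hf hfr P).colors) := by
      rw [hwP]
      refine (insW_perm cf _ c hlc).trans (List.Perm.trans ?_ (insW_perm cf _ _ hl).symm)
      exact List.Perm.append_left _ hperm'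
    obtain ⟨b, ⟨hbrel, hbcol⟩, -⟩ := hK.2.2.2 (parPath hwv hf hfr P) _ hpermW
    have hbool : b.edges.map (fun e => decide (G.src e = v)) =
        (parList G v f P.edges).map (fun e => decide (G.src e = v)) :=
      bool_invariant hK hin _ _ hbrel
    have hbcol' : b.edges.map G.color =
        insW cf (b.edges.map (fun e => decide (G.src e = v))) c := by
      rw [hbool]; exact hbcol
    have hsrcf : ∀ e ∈ b.edges, G.src e = v → e = f := by
      intro e he hs
      have hcfe : G.color e = cf := color_eq_of_insW cf b.edges c hbcol' e he hs
      obtain ⟨e', _, hu⟩ := hout.1 cf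
      exact (hu e ⟨hs, hcfe⟩).trans (hu f ⟨hf, rfl⟩).symm
    have hbsrc : b.src = P.src.1 := (hK.2.1 b _ hbrel).1
    have hbsrc' : b.src ≠ v := hbsrc ▸ P.src.2
    have hbrng : G.endV b.src b.edges ≠ v := by
      have h2 : b.rng = (parPath hwv hf hfr P).rng := (hK.2.1 b _ hbrel).2.1
      rw [parPath_rng hf hfr] at h2
      have h3 : b.rng ≠ v := fun hvv => P.rng.2 (h2.symm.trans hvv)
      exact h3
    have hpl : parList G v f (redList G v b.edges) = b.edges :=
      parList_redList hwv hf hfr b.edges.length b.edges le_rfl b.src hbsrc' b.comp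
        hbrng hsrcf
    have hcompt : (ReduceGraph G v w hwv).Composable ⟨b.src, hbsrc'⟩ (redList G v b.edges) :=
      comp_of_parList hwv hf hfr _ ⟨b.src, hbsrc'⟩ (by rw [hpl]; exact b.comp)
    refine ⟨⟨⟨b.src, hbsrc'⟩, redList G v b.edges, hcompt⟩, ⟨?_, ?_⟩, ?_⟩
    · exact ⟨b, parPath hwv hf hfr P, rfl, hpl.symm, rfl, rfl, hbrel⟩
    · show (redList G v b.edges).map (fun e => G.color e.1) = c
      refine redList_colors cf b.edges c ?_ hbcol'
      rw [hbool]; exact hlc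
    · rintro y ⟨hy1, hy2⟩
      refine huniq P c y _ hy1 ⟨b, parPath hwv hf hfr P, rfl, hpl.symm, rfl, rfl, hbrel⟩ hy2 ?_
      show (redList G v b.edges).map (fun e => G.color e.1) = c
      refine redList_colors cf b.edges c ?_ hbcol'
      rw [hbool]; exact hlc
  · -- SourceFree
    intro x i
    obtain ⟨e, her, hec⟩ := hsf x.1 i
    by_cases hs : G.src e = v
    · obtain ⟨g, hg, -⟩ := hin.1 i
      have hgs : G.src g ≠ v := fun hgv =>
        hwv (((hout.2.1 g hgv).2).symm.trans hg.1)
      refine ⟨⟨g, hgs⟩, ?_, hg.2⟩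
      rw [show (ReduceGraph G v w hwv).rng ⟨g, hgs⟩ = ⟨w, hwv⟩ from dif_pos hg.1]
      exact Subtype.ext ((hout.2.1 e hs).2.symm.trans her)
    · have hx : G.rng e ≠ v := her ▸ x.2
      refine ⟨⟨e, hs⟩, ?_, hec⟩
      rw [show (ReduceGraph G v w hwv).rng ⟨e, hs⟩ = ⟨G.rng e, hx⟩ from dif_neg hx]
      exact Subtype.ext her
  · -- RowFinite
    intro x i
    have hfin : Set.Finite ({e : G.E | G.rng e = x.1 ∧ G.color e = i} ∪
        {e : G.E | G.rng e = v ∧ G.color e = i}) := (hrf x.1 i).union (hrf v i)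
    refine Set.Finite.of_finite_image (hfin.subset ?_) Subtype.val_injective.injOn
    rintro _ ⟨e, ⟨h1, h2⟩, rfl⟩
    by_cases hr : G.rng e.1 = v
    · exact Or.inr ⟨hr, h2⟩
    · refine Or.inl ⟨?_, h2⟩
      rw [show (ReduceGraph G v w hwv).rng e = ⟨G.rng e.1, hr⟩ from dif_neg hr] at h1
      exact congrArg Subtype.val h1

end ColoredGraph
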